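/- Let κ be an uncountable cardinal, D a nonprincipal κ-complete ultrafilter on κ, P a partial order, and A a maximal antichain of P of cardinality at least κ. Then there exists a function f : κ → P such that for every p ∈ A, {α < κ : f(α) and p are incompatible in P} ∈ D; in particular, the image of A under the diagonal embedding is not a maximal antichain of the ultrapower P^κ/D, so the diagonal embedding of P into P^κ/D is not a complete embedding. -/

import Mathlib

open Filter

/-- Two elements of a preorder are compatible if they have a common lower bound. -/
def Compat {Q : Type*} [Preorder Q] (p q : Q) : Prop := ∃ r, r ≤ p ∧ r ≤ q

/-- A maximal antichain: a set of pairwise incompatible elements such that every element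
is compatible with some member. -/
def IsMaxAntichain' {Q : Type*} [Preorder Q] (A : Set Q) : Prop :=
  (∀ p ∈ A, ∀ q ∈ A, p ≠ q → ¬ Compat p q) ∧ ∀ p : Q, ∃ q ∈ A, Compat p q

/-- If `D` is a nonprincipal `κ`-complete ultrafilter on the uncountable
cardinal `κ` and `A` is a maximal antichain of `P` of size at least `κ`, then some class `[f]`
is incompatible with every member of `A`; hence the image of `A` under the diagonal embedding
is not a maximal antichain of `P^κ/D`. -/
theorem stmt_2 {κ P : Type u} [PartialOrder P]
    (hκ : Cardinal.aleph0 < Cardinal.mk κ)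
    (D : Ultrafilter κ)
    (hcomplete : ∀ S : Set (Set κ), Cardinal.mk S < Cardinal.mk κ →
      (∀ s ∈ S, s ∈ D) → ⋂₀ S ∈ D)
    (hnp : ∀ x : κ, {x} ∉ D)
    (A : Set P) (hA : IsMaxAntichain' A) (hbig : Cardinal.mk κ ≤ Cardinal.mk A) :
    (∃ f : κ → P, ∀ p ∈ A, {α : κ | ¬ Compat (f α) p} ∈ D) ∧
      ¬ IsMaxAntichain'
        ((fun p : P => ((fun _ => p : κ → P) : Germ (D : Filter κ) P)) '' A) := by
  obtain ⟨g⟩ := (Cardinal.le_def _ _).mp hbig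
  set f : κ → P := fun α => (g α : P) with hf
  have key : ∀ p ∈ A, {α : κ | ¬ Compat (f α) p} ∈ D := by
    intro p hp
    have hsub : {α : κ | (g α : P) = p} ∉ D := by
      intro hmem
      obtain ⟨α₀, hα₀⟩ := Ultrafilter.nonempty_of_mem hmem
      have : {α : κ | (g α : P) = p} = {α₀} := by
        ext β
        constructor
        · intro hβ
          have : (g β : P) = (g α₀ : P) := by
            simp only [Set.mem_setOf_eq] at hβ hα₀; rw [hβ, hα₀]
          have := g.injective (Subtype.ext this)
          simp [this]
        · rintro rfl; exact hα₀
      exact hnp α₀ (this ▸ hmem)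
    have hcompl : {α : κ | (g α : P) ≠ p} ∈ D :=
      (Ultrafilter.compl_mem_iff_notMem).mpr hsub
    filter_upwards [hcompl] with α hα
    exact hA.1 (f α) (g α).2 p hp hα
  refine ⟨⟨f, key⟩, ?_⟩
  rintro ⟨-, hmax⟩
  obtain ⟨q, hq, hcomp⟩ := hmax ((f : Germ (D : Filter κ) P))
  obtain ⟨p, hp, rfl⟩ := hq
  obtain ⟨r, hr1, hr2⟩ := hcomp
  induction r using Filter.Germ.inductionOn with
  | h h =>
    rw [Filter.Germ.coe_le] at hr1 hr2
    have : {α : κ | h α ≤ f α} ∩ ({α | h α ≤ p} ∩ {α : κ | ¬ Compat (f α) p}) ∈ D :=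
      Filter.inter_mem hr1 (Filter.inter_mem hr2 (key p hp))
    obtain ⟨α, h1, h2, h3⟩ := Ultrafilter.nonempty_of_mem this
    exact h3 ⟨h α, h1, h2⟩
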